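/- Let F be a differentiable cumulative distribution function on [0,1] satisfying F(x) ≥ x for all x, F(x) ≤ Cx for all x for some constant C > 1, and F concave. Then for all x ∈ [0, 1/C], the density satisfies F'(x) ≥ (1 - Cx)/(1 - x). -/

import Mathlib

/-- A differentiable concave CDF `F` on `[0,1]` with `x ≤ F x ≤ C·x` (`C > 1`) has
derivative at least `(1 - C x)/(1 - x)` on `[0, 1/C]`. -/
theorem stmt_0 (F F' : ℝ → ℝ) (C : ℝ) (hC : 1 < C)
    (hderiv : ∀ x ∈ Set.Icc (0:ℝ) 1, HasDerivAt F (F' x) x)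
    (hF0 : F 0 = 0) (hF1 : F 1 = 1)
    (hmono : MonotoneOn F (Set.Icc (0:ℝ) 1))
    (hconc : ConcaveOn ℝ (Set.Icc (0:ℝ) 1) F)
    (hlow : ∀ x ∈ Set.Icc (0:ℝ) 1, x ≤ F x)
    (hup : ∀ x ∈ Set.Icc (0:ℝ) 1, F x ≤ C * x) :
    ∀ x ∈ Set.Icc (0:ℝ) (1/C), (1 - C * x) / (1 - x) ≤ F' x := by
  intro x hx
  have hC0 : (0:ℝ) < C := lt_trans one_pos hC
  have hx1 : x < 1 := lt_of_le_of_lt hx.2 (by rw [div_lt_one hC0]; exact hC)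
  have hxI : x ∈ Set.Icc (0:ℝ) 1 := ⟨hx.1, hx1.le⟩
  have h1I : (1:ℝ) ∈ Set.Icc (0:ℝ) 1 := by norm_num
  have hs := hconc.slope_le_of_hasDerivAt hxI h1I hx1 (hderiv x hxI)
  rw [slope_def_field] at hs
  have hs' : (1 - F x) / (1 - x) ≤ F' x := by
    rw [hF1] at hs; exact hs
  refine le_trans ?_ hs'
  have hFx : F x ≤ C * x := hup x hxI
  gcongr
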